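/- For any integer m ≥ 1, ∏_{i=1}^m (1 − cos(2πi/(2m+1))) = (2m+1)/2^m. -/

import Mathlib

open Finset Complex

lemma key (m : ℕ) (hm : 1 ≤ m) :
    ∏ k ∈ Finset.range m, (2 - 2 * Real.cos (2 * Real.pi * (k + 1) / (2 * m + 1)))
    = 2 * m + 1 := by
  have hn : (2 * m + 1 : ℕ) ≠ 0 := by omega
  set μ : ℂ := Complex.exp (2 * Real.pi * I / (2 * m + 1)) with hμdef
  have hμ : IsPrimitiveRoot μ (2 * m + 1) := by
    have := Complex.isPrimitiveRoot_exp (2 * m + 1) hn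
    convert this using 2
    push_cast; ring
  have hroot : μ ^ (2 * m + 1) = 1 := hμ.pow_eq_one
  have h1 : ∏ k ∈ Finset.range (2 * m), (1 - μ ^ (k + 1)) = (2 * m + 1 : ℂ) := by
    have := IsPrimitiveRoot.prod_one_sub_pow_eq_order (n := 2 * m) (μ := μ) hμ
    rw [this]; push_cast; ring
  have hrefl : ∏ k ∈ Finset.range m, (1 - μ ^ (m + k + 1))
      = ∏ k ∈ Finset.range m, (1 - μ ^ (m + m - k)) := by
    rw [← Finset.prod_range_reflect (fun k => 1 - μ ^ (m + k + 1)) m]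
    refine Finset.prod_congr rfl fun k hk => ?_
    simp only [Finset.mem_range] at hk
    congr 2
    omega
  have hsplit : ∏ k ∈ Finset.range (2 * m), (1 - μ ^ (k + 1))
      = ∏ k ∈ Finset.range m, ((1 - μ ^ (k + 1)) * (1 - μ ^ (m + m - k))) := by
    rw [two_mul, Finset.prod_range_add, Finset.prod_mul_distrib, hrefl]
  have hpair : ∀ k ∈ Finset.range m, (1 - μ ^ (k + 1)) * (1 - μ ^ (m + m - k))
      = ((2 : ℂ) - 2 * Real.cos (2 * Real.pi * (k + 1) / (2 * m + 1))) := by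
    intro k hk
    simp only [Finset.mem_range] at hk
    set θ : ℝ := 2 * Real.pi * (k + 1) / (2 * m + 1) with hθ
    have hexp1 : μ ^ (k + 1) = Complex.exp (θ * I) := by
      rw [hμdef, ← Complex.exp_nat_mul]
      congr 1
      rw [hθ]
      push_cast
      field_simp
    have hexp2 : μ ^ (m + m - k) = Complex.exp (-θ * I) := by
      have h2 : μ ^ (m + m - k) * Complex.exp (θ * I) = 1 := by
        rw [← hexp1, ← pow_add]
        have : m + m - k + (k + 1) = 2 * m + 1 := by omega
        rw [this, hroot]
      have h3 : Complex.exp (-θ * I) * Complex.exp (θ * I) = 1 := by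
        rw [← Complex.exp_add]; ring_nf; exact Complex.exp_zero
      exact mul_right_cancel₀ (Complex.exp_ne_zero _) (h2.trans h3.symm)
    rw [hexp1, hexp2, Complex.exp_mul_I, Complex.exp_mul_I, Complex.cos_neg,
      Complex.sin_neg, Complex.ofReal_cos]
    have hI : (I : ℂ) ^ 2 = -1 := Complex.I_sq
    have hs : Complex.sin θ ^ 2 + Complex.cos θ ^ 2 = 1 := Complex.sin_sq_add_cos_sq θ
    linear_combination hs - (Complex.sin θ) ^ 2 * hI
  have hfin : ∏ k ∈ Finset.range m,
      ((2 : ℂ) - 2 * Real.cos (2 * Real.pi * (k + 1) / (2 * m + 1))) = (2 * m + 1 : ℂ) := by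
    rw [← Finset.prod_congr rfl hpair, ← hsplit, h1]
  exact_mod_cast hfin

theorem prod_one_sub_cos (m : ℕ) (hm : 1 ≤ m) :
    ∏ i ∈ Finset.Icc 1 m, (1 - Real.cos (2 * Real.pi * i / (2 * m + 1)))
    = (2 * m + 1) / 2 ^ m := by
  have hk := key m hm
  have hIcc : ∏ i ∈ Finset.Icc 1 m, (1 - Real.cos (2 * Real.pi * i / (2 * m + 1)))
      = ∏ k ∈ Finset.range m, (1 - Real.cos (2 * Real.pi * (k + 1) / (2 * m + 1))) := by
    rw [← Finset.Ico_add_one_right_eq_Icc, Finset.prod_Ico_eq_prod_range]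
    norm_num
    refine Finset.prod_congr rfl fun k hk => ?_
    ring_nf
  have h2 : ∏ k ∈ Finset.range m, (2 - 2 * Real.cos (2 * Real.pi * (k + 1) / (2 * m + 1)))
      = 2 ^ m * ∏ k ∈ Finset.range m, (1 - Real.cos (2 * Real.pi * (k + 1) / (2 * m + 1))) := by
    rw [show (2:ℝ) ^ m = ∏ _k ∈ Finset.range m, (2:ℝ) by simp, ← Finset.prod_mul_distrib]
    exact Finset.prod_congr rfl fun k _ => by ring
  rw [hIcc]
  rw [h2] at hk
  have h2m : (0:ℝ) < 2 ^ m := by positivity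
  field_simp at hk ⊢
  linarith [hk]
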